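/- Let T be a Laver tree with stem τ and let A ⊆ T be upwards closed in T. Then an (A, ω₁ ∪ {∞}, T) Laver ranking exists: there is a function r from {σ ∈ T : τ ⊆ σ} to ω₁ ∪ {∞} with r(σ) = 0 iff σ ∈ A, and for σ ∉ A, r(σ) = liminf over children σ⌢n ∈ T of r(σ⌢n)+1. -/

import Mathlib

/-- A tree on ω: a set of finite strings closed under initial segments. -/
def IsTree (T : Set (List ℕ)) : Prop := ∀ σ ∈ T, ∀ ρ : List ℕ, ρ <+: σ → ρ ∈ T

/-- A Laver tree with stem `τ`: a tree containing `τ`, all of whose elements are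
comparable with `τ`, and in which every node extending `τ` has infinitely many
immediate children. -/
def IsLaverTree (T : Set (List ℕ)) (τ : List ℕ) : Prop :=
  IsTree T ∧ τ ∈ T ∧ (∀ σ ∈ T, τ <+: σ ∨ σ <+: τ) ∧
    ∀ σ ∈ T, τ <+: σ → {n : ℕ | σ ++ [n] ∈ T}.Infinite

/-- `A` is upwards closed in the tree `T`. -/
def UpClosed (T A : Set (List ℕ)) : Prop :=
  ∀ σ ∈ A, ∀ ρ ∈ T, σ <+: ρ → ρ ∈ A

/-- The successor function on ω₁ ∪ {∞} (with ∞ + 1 = ∞), modelled on `WithTop Ordinal`. -/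
def osucc : WithTop Ordinal → WithTop Ordinal := WithTop.map (· + 1)

/-- An `(A, ω₁ ∪ {∞}, T)` Laver ranking (for a Laver tree `T` with stem `τ`):
`r σ = 0` iff `σ ∈ A`, and for `σ ∉ A`, `r σ` is the liminf over the children
`σ⌢n ∈ T` of `r (σ⌢n) + 1`, i.e. the least `x` such that infinitely many
children satisfy `r (σ⌢n) + 1 ≤ x`. -/
def IsLaverRanking (T A : Set (List ℕ)) (τ : List ℕ)
    (r : List ℕ → WithTop Ordinal) : Prop :=
  ∀ σ ∈ T, τ <+: σ →
    ((r σ = 0 ↔ σ ∈ A) ∧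
      (σ ∉ A → IsLeast {x : WithTop Ordinal |
        {n : ℕ | σ ++ [n] ∈ T ∧ osucc (r (σ ++ [n])) ≤ x}.Infinite} (r σ)))

universe u

def Q (T A : Set (List ℕ)) : Ordinal.{u} → List ℕ → Prop :=
  Ordinal.lt_wf.fix fun α IH σ =>
    σ ∈ A ∨ {n : ℕ | σ ++ [n] ∈ T ∧ ∃ β, ∃ h : β < α, IH β h (σ ++ [n])}.Infinite

lemma Q_iff (T A : Set (List ℕ)) (α : Ordinal.{u}) (σ : List ℕ) :
    Q T A α σ ↔ σ ∈ A ∨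
      {n : ℕ | σ ++ [n] ∈ T ∧ ∃ β < α, Q T A β (σ ++ [n])}.Infinite := by
  unfold Q
  rw [WellFounded.fix_eq]
  simp only [exists_prop]

lemma Q_mono (T A : Set (List ℕ)) {α α' : Ordinal.{u}} (h : α ≤ α') {σ : List ℕ}
    (hq : Q T A α σ) : Q T A α' σ := by
  rw [Q_iff] at hq ⊢
  rcases hq with h1 | h2
  · exact Or.inl h1
  · refine Or.inr (h2.mono ?_)
    rintro n ⟨hn, β, hβ, hQ⟩
    exact ⟨hn, β, lt_of_lt_of_le hβ h, hQ⟩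

lemma Q_zero_iff (T A : Set (List ℕ)) (σ : List ℕ) : Q.{u} T A 0 σ ↔ σ ∈ A := by
  rw [Q_iff]
  constructor
  · rintro (h | h)
    · exact h
    · exfalso
      refine h ?_
      refine Set.Finite.subset (Set.finite_empty) ?_
      rintro n ⟨-, β, hβ, -⟩
      exact absurd hβ (not_lt_of_ge (zero_le (a := β)))
  · exact Or.inl

open Classical in
noncomputable def rk (T A : Set (List ℕ)) (σ : List ℕ) : WithTop Ordinal.{u} :=
  if h : ∃ α : Ordinal.{u}, Q T A α σ then (↑(sInf {α : Ordinal.{u} | Q T A α σ}) : WithTop Ordinal) else ⊤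

lemma rk_le_iff (T A : Set (List ℕ)) (σ : List ℕ) (β : Ordinal.{u}) :
    rk T A σ ≤ (β : WithTop Ordinal) ↔ Q T A β σ := by
  by_cases h : ∃ α : Ordinal.{u}, Q T A α σ
  · unfold rk
    rw [dif_pos h, WithTop.coe_le_coe]
    exact ⟨fun hle => Q_mono T A hle (csInf_mem h), fun hq => csInf_le' hq⟩
  · unfold rk
    rw [dif_neg h]
    simp only [top_le_iff]
    constructor
    · intro he; exact absurd he (by simp)
    · intro hq; exact absurd ⟨β, hq⟩ h

theorem laverRanking_exists' (T A : Set (List ℕ)) (τ : List ℕ)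
    (hT : IsLaverTree T τ) (hAT : A ⊆ T) (hA : UpClosed T A) :
    ∃ r : List ℕ → WithTop Ordinal.{u}, IsLaverRanking T A τ r := by
  refine ⟨rk.{u} T A, ?_⟩
  intro σ hσ hτσ
  constructor
  · -- rk σ = 0 ↔ σ ∈ A
    rw [show (0 : WithTop Ordinal) = ((0 : Ordinal) : WithTop Ordinal) from rfl]
    constructor
    · intro h
      rw [← Q_zero_iff T A σ, ← rk_le_iff]
      exact le_of_eq h
    · intro h
      refine le_antisymm ?_ ?_
      · rw [rk_le_iff, Q_zero_iff]; exact h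
      · induction rk T A σ using WithTop.recTopCoe with
        | top => exact le_top
        | coe γ => exact WithTop.coe_le_coe.mpr (zero_le (a := γ))
  · intro hσA
    constructor
    · -- membership
      show {n : ℕ | σ ++ [n] ∈ T ∧ osucc (rk T A (σ ++ [n])) ≤ rk T A σ}.Infinite
      by_cases h : ∃ α : Ordinal.{u}, Q T A α σ
      · have hmem : Q T A (sInf {α | Q T A α σ}) σ := csInf_mem h
        have hrk : rk T A σ = ↑(sInf {α | Q T A α σ}) := by
          unfold rk; rw [dif_pos h]
        rw [Q_iff] at hmem
        rcases hmem with h1 | h2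
        · exact absurd h1 hσA
        · refine h2.mono ?_
          rintro n ⟨hn, β, hβ, hQ⟩
          refine ⟨hn, ?_⟩
          have hle : rk T A (σ ++ [n]) ≤ (β : WithTop Ordinal) :=
            (rk_le_iff T A _ β).mpr hQ
          rw [hrk]
          rcases WithTop.le_coe_iff.mp hle with ⟨γ, hγeq, hγle⟩
          rw [hγeq]
          show ((γ + 1 : Ordinal) : WithTop Ordinal) ≤ _
          rw [WithTop.coe_le_coe]
          exact Order.add_one_le_of_lt (lt_of_le_of_lt hγle hβ)
      · have hrk : rk T A σ = ⊤ := by unfold rk; rw [dif_neg h]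
        rw [hrk]
        refine (hT.2.2.2 σ hσ hτσ).mono ?_
        intro n hn
        exact ⟨hn, le_top⟩
    · -- lower bound
      rintro x hx
      induction x using WithTop.recTopCoe with
      | top => exact le_top
      | coe δ =>
        rw [rk_le_iff, Q_iff]
        refine Or.inr (hx.mono ?_)
        rintro n ⟨hn, hle⟩
        refine ⟨hn, ?_⟩
        -- osucc (rk child) ≤ ↑δ
        rcases WithTop.le_coe_iff.mp hle with ⟨γ', hγ'eq, hγ'le⟩
        obtain ⟨γ, hγ⟩ : ∃ γ : Ordinal, rk T A (σ ++ [n]) = ↑γ := by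
          cases hh : rk T A (σ ++ [n]) with
          | top => rw [hh] at hγ'eq; exact absurd hγ'eq (by simp [osucc])
          | coe γ => exact ⟨γ, rfl⟩
        rw [hγ] at hγ'eq
        simp only [osucc, WithTop.map_coe, WithTop.coe_inj] at hγ'eq
        have hγ1 : γ + 1 ≤ δ := hγ'eq ▸ hγ'le
        exact ⟨γ, lt_of_lt_of_le (Order.lt_add_one_iff.mpr le_rfl) hγ1,
          (rk_le_iff T A _ γ).mp (le_of_eq hγ)⟩

/-- for any Laver tree `T` with stem `τ` and any `A ⊆ T` upwards
closed in `T`, an `(A, ω₁ ∪ {∞}, T)` Laver ranking exists. -/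
theorem laverRanking_exists (T A : Set (List ℕ)) (τ : List ℕ)
    (hT : IsLaverTree T τ) (hAT : A ⊆ T) (hA : UpClosed T A) :
    ∃ r : List ℕ → WithTop Ordinal, IsLaverRanking T A τ r :=
  laverRanking_exists' T A τ hT hAT hA
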